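/- arXiv:2211.09100 — 2 statements merged into one kernel-verified Lean document; each statement's English description precedes it below -/
import Mathlib

section
/- Let d ≥ 1, C_g > 0, λ ≥ C_g², C_h ≥ 0, T ≥ 1, and let g_1, …, g_T ∈ ℝ^d satisfy ‖g_t‖₂ ≤ C_g for all 1 ≤ t ≤ T. For 1 ≤ t ≤ T define Σ_t = λI + Σ_{i=1}^{t-1} g_i g_iᵀ and u_t = ‖g_t‖_{Σ_t^{-1}}. Let 0 < β_1 ≤ β_2 ≤ … ≤ β_T be a nondecreasing sequence, and let r_1, …, r_T be nonnegative reals satisfying r_t ≤ 2√(β_t)·u_t + 2β_t C_h/λ for every t. Then Σ_{t=1}^T r_t² ≤ 16 β_T d · log(1 + T·C_g²/(d·λ)) + 8 β_T² C_h² T / λ². -/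
open Matrix Finset

lemma aux_psd_vecMulVec (d : ℕ) (v : Fin d → ℝ) : (vecMulVec v v).PosSemidef := by
  rw [vecMulVec_eq Unit]
  have h : replicateCol Unit v = (replicateRow Unit v)ᴴ := by
    ext i j; simp [conjTranspose_apply]
  rw [h]
  exact posSemidef_conjTranspose_mul_self _

lemma aux_det_step {d : ℕ} {A : Matrix (Fin d) (Fin d) ℝ} (hA : A.PosDef) (v : Fin d → ℝ) :
    det (A + vecMulVec v v) = det A * (1 + v ⬝ᵥ (A⁻¹ *ᵥ v)) := by
  rw [vecMulVec_eq Unit, det_add_replicateCol_mul_replicateRow (isUnit_iff_ne_zero.mpr hA.det_pos.ne') v v]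
  congr 1
  rw [det_unique]
  simp only [mul_apply, dotProduct, mulVec, Finset.sum_mul, Finset.mul_sum, mul_assoc,
    Matrix.add_apply, Matrix.one_apply_eq, Matrix.replicateRow_apply, Matrix.replicateCol_apply]
  rw [Finset.sum_comm]

lemma aux_dot_self_nonneg {d : ℕ} (v : Fin d → ℝ) : 0 ≤ v ⬝ᵥ v :=
  Finset.sum_nonneg fun i _ => mul_self_nonneg _

lemma aux_inv_quad {d : ℕ} {A : Matrix (Fin d) (Fin d) ℝ} (hA : A.PosDef) {lam : ℝ}
    (hlam : 0 < lam) (hlow : ∀ x : Fin d → ℝ, lam * (x ⬝ᵥ x) ≤ x ⬝ᵥ (A *ᵥ x))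
    (v : Fin d → ℝ) : v ⬝ᵥ (A⁻¹ *ᵥ v) ≤ (v ⬝ᵥ v) / lam := by
  set y := A⁻¹ *ᵥ v with hy
  have hAy : A *ᵥ y = v := by
    rw [hy, mulVec_mulVec, Matrix.mul_nonsing_inv _ (isUnit_iff_ne_zero.mpr hA.det_pos.ne'), one_mulVec]
  have hq0 : 0 ≤ v ⬝ᵥ y := by simpa using hA.inv.posSemidef.dotProduct_mulVec_nonneg v
  have h1 : lam * (y ⬝ᵥ y) ≤ v ⬝ᵥ y := by
    have h := hlow y
    rw [hAy] at h
    rwa [dotProduct_comm v y]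
  have hcs : (v ⬝ᵥ y) ^ 2 ≤ (v ⬝ᵥ v) * (y ⬝ᵥ y) := by
    have := Finset.sum_mul_sq_le_sq_mul_sq Finset.univ v y
    simpa [dotProduct, pow_two, Finset.mul_sum] using this
  rw [le_div_iff₀ hlam]
  rcases eq_or_lt_of_le hq0 with h | h
  · nlinarith [aux_dot_self_nonneg v]
  · nlinarith [aux_dot_self_nonneg v, aux_dot_self_nonneg y]

lemma aux_trace_eq_sum_eigenvalues {d : ℕ} {A : Matrix (Fin d) (Fin d) ℝ}
    (hA : A.IsHermitian) : trace A = ∑ i, hA.eigenvalues i := by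
  simpa using hA.trace_eq_sum_eigenvalues

lemma aux_det_le_trace_pow {d : ℕ} (hd : 0 < d) {A : Matrix (Fin d) (Fin d) ℝ}
    (hA : A.PosSemidef) : det A ≤ (trace A / d) ^ d := by
  have hH := hA.isHermitian
  have hdet : det A = ∏ i, hH.eigenvalues i := by
    simpa using hH.det_eq_prod_eigenvalues
  have htr : trace A = ∑ i, hH.eigenvalues i := aux_trace_eq_sum_eigenvalues hH
  have hz : ∀ i : Fin d, 0 ≤ hH.eigenvalues i := hA.eigenvalues_nonneg
  have hdne : (d : ℝ) ≠ 0 := Nat.cast_ne_zero.mpr hd.ne'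
  have hgm : ∏ i : Fin d, (hH.eigenvalues i) ^ ((1 : ℝ) / d) ≤
      ∑ i : Fin d, (1 / (d : ℝ)) * hH.eigenvalues i := by
    apply Real.geom_mean_le_arith_mean_weighted
    · intro i _; positivity
    · rw [Finset.sum_const, Finset.card_univ, Fintype.card_fin, nsmul_eq_mul]
      field_simp
    · intro i _; exact hz i
  have hprod : (∏ i : Fin d, (hH.eigenvalues i) ^ ((1 : ℝ) / d)) ^ d
      = ∏ i, hH.eigenvalues i := by
    rw [← Finset.prod_pow]
    apply Finset.prod_congr rfl
    intro i _
    rw [← Real.rpow_natCast ((hH.eigenvalues i) ^ ((1:ℝ)/d)) d, ← Real.rpow_mul (hz i)]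
    rw [one_div, inv_mul_cancel₀ hdne, Real.rpow_one]
  have hrhs : ∑ i : Fin d, (1 / (d : ℝ)) * hH.eigenvalues i = trace A / d := by
    rw [htr, ← Finset.mul_sum, one_div, inv_mul_eq_div]
  calc det A = (∏ i : Fin d, (hH.eigenvalues i) ^ ((1 : ℝ) / d)) ^ d := by
        rw [hprod, hdet]
    _ ≤ (trace A / d) ^ d := by
        apply pow_le_pow_left₀ (Finset.prod_nonneg fun i _ => Real.rpow_nonneg (hz i) _)
        rw [← hrhs]; exact hgm

lemma aux_le_two_log {x : ℝ} (h0 : 0 ≤ x) (h1 : x ≤ 1) : x ≤ 2 * Real.log (1 + x) := by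
  have h1x : (0 : ℝ) < 1 + x := by linarith
  have hlog := Real.log_le_sub_one_of_pos (show (0:ℝ) < (1+x)⁻¹ by positivity)
  rw [Real.log_inv] at hlog
  have h2 : (1 + x)⁻¹ - 1 = -(x / (1 + x)) := by field_simp; ring
  have h3 : x / (1 + x) ≤ Real.log (1 + x) := by
    rw [h2] at hlog; linarith
  have h4 : x / 2 ≤ x / (1 + x) :=
    div_le_div_of_nonneg_left h0 h1x (by linarith)
  linarith

lemma aux_add_sq_le (a b : ℝ) : (a + b) ^ 2 ≤ 2 * a ^ 2 + 2 * b ^ 2 := by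
  nlinarith [sq_nonneg (a - b)]

lemma aux_sq_le_of_sqrt_le {x c : ℝ} (hx : 0 ≤ x) (h : Real.sqrt x ≤ c) : x ≤ c ^ 2 := by
  have h1 := Real.sq_sqrt hx
  nlinarith [Real.sqrt_nonneg x]

set_option maxHeartbeats 1000000 in
/-- Sum of squared instantaneous regrets (deterministic core of Lemma 5.8):
if `r_t ≤ 2√(β_t) u_t + 2β_t C_h/λ` with `u_t = ‖g_t‖_{Σ_t⁻¹}`, `β` positive
nondecreasing, `‖g_t‖₂ ≤ C_g` and `λ ≥ C_g²`, then
`∑_{t=1}^T r_t² ≤ 16 β_T d log(1 + T C_g²/(d λ)) + 8 β_T² C_h² T / λ²`. -/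
theorem sum_sq_regret_bound
    (d : ℕ) (hd : 1 ≤ d) (Cg lam Ch : ℝ) (hCg : 0 < Cg) (hlam : Cg ^ 2 ≤ lam)
    (hCh : 0 ≤ Ch)
    (T : ℕ) (hT : 1 ≤ T) (g : ℕ → Fin d → ℝ)
    (hg : ∀ t, 1 ≤ t → t ≤ T → Real.sqrt (g t ⬝ᵥ g t) ≤ Cg)
    (S : ℕ → Matrix (Fin d) (Fin d) ℝ)
    (hS : ∀ t, S t = lam • (1 : Matrix (Fin d) (Fin d) ℝ) +
      ∑ i ∈ Finset.Ico 1 t, vecMulVec (g i) (g i))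
    (u : ℕ → ℝ)
    (hu : ∀ t, u t = Real.sqrt (g t ⬝ᵥ ((S t)⁻¹ *ᵥ g t)))
    (β : ℕ → ℝ) (hβ1 : 0 < β 1)
    (hβmono : ∀ s t, 1 ≤ s → s ≤ t → t ≤ T → β s ≤ β t)
    (r : ℕ → ℝ) (hr0 : ∀ t, 1 ≤ t → t ≤ T → 0 ≤ r t)
    (hr : ∀ t, 1 ≤ t → t ≤ T → r t ≤ 2 * Real.sqrt (β t) * u t + 2 * β t * Ch / lam) :
    ∑ t ∈ Finset.Icc 1 T, r t ^ 2 ≤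
      16 * β T * d * Real.log (1 + T * Cg ^ 2 / (d * lam)) +
        8 * β T ^ 2 * Ch ^ 2 * T / lam ^ 2 := by
  have hlam0 : 0 < lam := lt_of_lt_of_le (by positivity) hlam
  have hd0 : (0:ℝ) < d := by exact_mod_cast hd
  have hsumPSD : ∀ s : Finset ℕ, (∑ i ∈ s, vecMulVec (g i) (g i)).PosSemidef := by
    intro s
    induction s using Finset.induction_on with
    | empty => simpa using (Matrix.PosSemidef.zero (n := Fin d) (R := ℝ))
    | insert _ _ h ih =>
      rw [Finset.sum_insert h]
      exact (aux_psd_vecMulVec d _).add ih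
  have hPD : ∀ t, (S t).PosDef := by
    intro t
    rw [hS t]
    have h1 : (lam • (1 : Matrix (Fin d) (Fin d) ℝ)).PosDef := by
      rw [Matrix.smul_one_eq_diagonal]
      exact (Matrix.posDef_diagonal_iff).mpr fun _ => hlam0
    exact h1.add_posSemidef (hsumPSD _)
  have hlow : ∀ t (x : Fin d → ℝ), lam * (x ⬝ᵥ x) ≤ x ⬝ᵥ (S t *ᵥ x) := by
    intro t x
    rw [hS t, Matrix.add_mulVec, dotProduct_add, Matrix.smul_mulVec, Matrix.one_mulVec,
      dotProduct_smul, smul_eq_mul]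
    have h := (hsumPSD (Finset.Ico 1 t)).dotProduct_mulVec_nonneg x
    simp only [star_trivial] at h
    linarith only [h]
  set w : ℕ → ℝ := fun t => g t ⬝ᵥ ((S t)⁻¹ *ᵥ g t) with hwdef
  have hw0 : ∀ t, 0 ≤ w t := fun t => by simpa using (hPD t).inv.posSemidef.dotProduct_mulVec_nonneg (g t)
  have hgg : ∀ t, 1 ≤ t → t ≤ T → g t ⬝ᵥ g t ≤ Cg ^ 2 := by
    intro t h1 h2
    exact aux_sq_le_of_sqrt_le (aux_dot_self_nonneg (g t)) (hg t h1 h2)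
  have hwle : ∀ t, 1 ≤ t → t ≤ T → w t ≤ 1 := by
    intro t h1 h2
    have h3 := aux_inv_quad (hPD t) hlam0 (hlow t) (g t)
    calc w t ≤ (g t ⬝ᵥ g t) / lam := h3
      _ ≤ Cg ^ 2 / lam := by gcongr; exact hgg t h1 h2
      _ ≤ 1 := by rw [div_le_one hlam0]; exact hlam
  have hu2 : ∀ t, u t ^ 2 = w t := fun t => by
    rw [hu t, Real.sq_sqrt (hw0 t)]
  have hstep : ∀ t, 1 ≤ t → (S (t+1)).det = (S t).det * (1 + w t) := by
    intro t ht
    have hrec : S (t+1) = S t + vecMulVec (g t) (g t) := by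
      rw [hS (t+1), hS t, Finset.sum_Ico_succ_top ht, add_assoc]
    rw [hrec, aux_det_step (hPD t) (g t)]
  have htel : ∀ N : ℕ, Real.log ((S (N+1)).det)
      = d * Real.log lam + ∑ t ∈ Finset.Icc 1 N, Real.log (1 + w t) := by
    intro N
    induction N with
    | zero =>
      rw [Finset.Icc_eq_empty (by omega), Finset.sum_empty, add_zero,
        hS 1, Finset.Ico_self, Finset.sum_empty, add_zero, Matrix.det_smul,
        Matrix.det_one, mul_one, Fintype.card_fin, Real.log_pow]
    | succ N ih =>
      have hN1 : (1:ℕ) ≤ N + 1 := Nat.succ_le_succ (Nat.zero_le N)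
      have hwne : (1 : ℝ) + w (N+1) ≠ 0 := by
        have := hw0 (N+1); intro hc; linarith only [this, hc]
      have hsplit : ∑ t ∈ Finset.Icc 1 (N+1), Real.log (1 + w t)
          = (∑ t ∈ Finset.Icc 1 N, Real.log (1 + w t)) + Real.log (1 + w (N+1)) := by
        rw [← Finset.Ico_add_one_right_eq_Icc, Finset.sum_Ico_succ_top hN1, Finset.Ico_add_one_right_eq_Icc]
      rw [hstep (N+1) hN1, Real.log_mul (hPD (N+1)).det_pos.ne' hwne, ih, hsplit]
      ring
  have htrace_eq : (S (T+1)).trace = d * lam + ∑ i ∈ Finset.Ico 1 (T+1), (g i ⬝ᵥ g i) := by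
    rw [hS (T+1), Matrix.trace_add, Matrix.trace_smul, Matrix.trace_one, Matrix.trace_sum]
    have hterm : ∀ i : ℕ, (vecMulVec (g i) (g i)).trace = g i ⬝ᵥ g i := fun i => by
      rw [Matrix.vecMulVec_eq Unit, Matrix.trace_replicateCol_mul_replicateRow]
    rw [Fintype.card_fin]
    simp only [hterm, smul_eq_mul]
    ring
  have htrace_le : (S (T+1)).trace ≤ d * lam + T * Cg ^ 2 := by
    rw [htrace_eq]
    have h1 : ∑ i ∈ Finset.Ico 1 (T+1), (g i ⬝ᵥ g i) ≤ T * Cg ^ 2 := by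
      have h2 : ∀ i ∈ Finset.Ico 1 (T+1), g i ⬝ᵥ g i ≤ Cg ^ 2 := by
        intro i hi
        obtain ⟨hi1, hi2⟩ := Finset.mem_Ico.mp hi
        exact hgg i hi1 (by omega)
      calc ∑ i ∈ Finset.Ico 1 (T+1), (g i ⬝ᵥ g i) ≤ ∑ _i ∈ Finset.Ico 1 (T+1), Cg ^ 2 :=
            Finset.sum_le_sum h2
        _ = T * Cg ^ 2 := by
            rw [Finset.sum_const, Nat.card_Ico]
            simp [nsmul_eq_mul]
    linarith
  have hdle : (S (T+1)).det ≤ (lam + T * Cg ^ 2 / d) ^ d := by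
    refine (aux_det_le_trace_pow (by omega) (hPD (T+1)).posSemidef).trans ?_
    apply pow_le_pow_left₀
    · rw [htrace_eq]
      have := Finset.sum_nonneg (fun i (_ : i ∈ Finset.Ico 1 (T+1)) => aux_dot_self_nonneg (g i))
      positivity
    · rw [div_le_iff₀ hd0]
      have hTc : (0:ℝ) ≤ (T : ℝ) * Cg ^ 2 := by positivity
      calc (S (T+1)).trace ≤ d * lam + T * Cg ^ 2 := htrace_le
        _ = (lam + T * Cg ^ 2 / d) * d := by field_simp
  have hlogdet : Real.log ((S (T+1)).det) ≤ d * Real.log (lam + T * Cg ^ 2 / d) := by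
    calc Real.log ((S (T+1)).det) ≤ Real.log ((lam + T * Cg ^ 2 / d) ^ d) :=
          Real.log_le_log (hPD (T+1)).det_pos hdle
      _ = d * Real.log (lam + T * Cg ^ 2 / d) := by rw [Real.log_pow]
  have heq : Real.log (lam + T * Cg ^ 2 / d) - Real.log lam
      = Real.log (1 + T * Cg ^ 2 / (d * lam)) := by
    rw [← Real.log_div (by positivity) hlam0.ne']
    congr 1
    field_simp
  have hsumlog : ∑ t ∈ Finset.Icc 1 T, Real.log (1 + w t)
      ≤ d * Real.log (1 + T * Cg ^ 2 / (d * lam)) := by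
    have h1 := htel T
    have h2 : (d:ℝ) * (Real.log (lam + T * Cg ^ 2 / d) - Real.log lam)
        = d * Real.log (1 + T * Cg ^ 2 / (d * lam)) := by rw [heq]
    linarith only [h1, hlogdet, h2]
  have hsumw : ∑ t ∈ Finset.Icc 1 T, w t
      ≤ 2 * (d * Real.log (1 + T * Cg ^ 2 / (d * lam))) := by
    have h1 : ∑ t ∈ Finset.Icc 1 T, w t ≤ ∑ t ∈ Finset.Icc 1 T, 2 * Real.log (1 + w t) := by
      apply Finset.sum_le_sum
      intro t ht
      obtain ⟨ht1, ht2⟩ := Finset.mem_Icc.mp ht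
      exact aux_le_two_log (hw0 t) (hwle t ht1 ht2)
    rw [← Finset.mul_sum] at h1
    linarith only [h1, hsumlog]
  have hβT : 0 < β T := lt_of_lt_of_le hβ1 (hβmono 1 T le_rfl hT le_rfl)
  have hfin : ∀ t ∈ Finset.Icc 1 T, r t ^ 2 ≤ 8 * β T * w t + 8 * β T ^ 2 * Ch ^ 2 / lam ^ 2 := by
    intro t ht
    obtain ⟨h1, h2⟩ := Finset.mem_Icc.mp ht
    have hbt : 0 < β t := lt_of_lt_of_le hβ1 (hβmono 1 t le_rfl h1 h2)
    have hbT : β t ≤ β T := hβmono t T h1 h2 le_rfl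
    have hu0 : 0 ≤ u t := by rw [hu t]; exact Real.sqrt_nonneg _
    have hrb := hr t h1 h2
    have hsq : r t ^ 2 ≤ (2 * Real.sqrt (β t) * u t + 2 * β t * Ch / lam) ^ 2 :=
      pow_le_pow_left₀ (hr0 t h1 h2) hrb 2
    have hsqrtβ : Real.sqrt (β t) ^ 2 = β t := Real.sq_sqrt hbt.le
    have ha2 : (2 * Real.sqrt (β t) * u t) ^ 2 = 4 * β t * w t := by
      rw [mul_pow, mul_pow, hsqrtβ, hu2 t]; ring
    have hb2 : (2 * β t * Ch / lam) ^ 2 = 4 * β t ^ 2 * Ch ^ 2 / lam ^ 2 := by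
      field_simp; ring
    have h2ab : (2 * Real.sqrt (β t) * u t + 2 * β t * Ch / lam) ^ 2
        ≤ 8 * β t * w t + 8 * β t ^ 2 * Ch ^ 2 / lam ^ 2 := by
      calc (2 * Real.sqrt (β t) * u t + 2 * β t * Ch / lam) ^ 2
          ≤ 2 * (2 * Real.sqrt (β t) * u t) ^ 2 + 2 * (2 * β t * Ch / lam) ^ 2 :=
            aux_add_sq_le _ _
        _ = 8 * β t * w t + 8 * β t ^ 2 * Ch ^ 2 / lam ^ 2 := by rw [ha2, hb2]; ring
    have h3 : 8 * β t * w t ≤ 8 * β T * w t :=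
      mul_le_mul_of_nonneg_right (by linarith only [hbT]) (hw0 t)
    have h4 : 8 * β t ^ 2 * Ch ^ 2 / lam ^ 2 ≤ 8 * β T ^ 2 * Ch ^ 2 / lam ^ 2 := by
      gcongr
    linarith only [hsq, h2ab, h3, h4]
  calc ∑ t ∈ Finset.Icc 1 T, r t ^ 2
      ≤ ∑ t ∈ Finset.Icc 1 T, (8 * β T * w t + 8 * β T ^ 2 * Ch ^ 2 / lam ^ 2) :=
        Finset.sum_le_sum hfin
    _ = 8 * β T * (∑ t ∈ Finset.Icc 1 T, w t) + T * (8 * β T ^ 2 * Ch ^ 2 / lam ^ 2) := by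
        rw [Finset.sum_add_distrib, ← Finset.mul_sum, Finset.sum_const, Nat.card_Icc]
        simp [nsmul_eq_mul]
    _ ≤ 8 * β T * (2 * (d * Real.log (1 + T * Cg ^ 2 / (d * lam))))
        + T * (8 * β T ^ 2 * Ch ^ 2 / lam ^ 2) :=
        add_le_add_left
          (mul_le_mul_of_nonneg_left hsumw (by linarith only [hβT])) _
    _ = 16 * β T * d * Real.log (1 + T * Cg ^ 2 / (d * lam))
        + 8 * β T ^ 2 * Ch ^ 2 * T / lam ^ 2 := by ring
end

section
/- Let d ≥ 1, C_g > 0, λ ≥ C_g², C_h ≥ 0, F ≥ 0, n ≥ 0 and T ≥ 1. Let g_1, …, g_T ∈ ℝ^d satisfy ‖g_t‖₂ ≤ C_g for all t; define Σ_t = λI + Σ_{i=1}^{t-1} g_i g_iᵀ and u_t = ‖g_t‖_{Σ_t^{-1}}. Let 0 < β_1 ≤ … ≤ β_T be nondecreasing. Let r'_1, …, r'_n be reals with r'_j ≤ 2F for all j, and let r_1, …, r_T be nonnegative reals with r_t ≤ 2√(β_t)·u_t + 2β_t C_h/λ for all t. Then the total sum satisfies Σ_{j=1}^n r'_j + Σ_{t=1}^T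 r_t ≤ 2nF + √( T·(16 β_T d · log(1 + T·C_g²/(d·λ)) + 8 β_T² C_h² T / λ²) ). -/
open Matrix Finset

lemma vmv_psd {d : ℕ} (v : Fin d → ℝ) : (vecMulVec v v).PosSemidef := by
  refine Matrix.PosSemidef.of_dotProduct_mulVec_nonneg ?_ ?_
  · ext i j; simp [vecMulVec_apply, mul_comm, IsHermitian]
  · intro x
    have h : (vecMulVec v v) *ᵥ x = (v ⬝ᵥ x) • v := by
      ext i
      simp only [vecMulVec_apply, mulVec, dotProduct, Pi.smul_apply, smul_eq_mul,
        Finset.sum_mul]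
      exact Finset.sum_congr rfl fun j _ => by ring
    rw [h]
    simp only [star_trivial, dotProduct_smul]
    rw [smul_eq_mul, dotProduct_comm]
    exact mul_self_nonneg _

lemma vmv_trace {d : ℕ} (v : Fin d → ℝ) : (vecMulVec v v).trace = v ⬝ᵥ v := by
  simp [Matrix.trace, vecMulVec_apply, Matrix.diag, dotProduct]

lemma trace_eq_sum_eig {d : ℕ} {A : Matrix (Fin d) (Fin d) ℝ} (hA : A.IsHermitian) :
    A.trace = ∑ i, hA.eigenvalues i := by
  simpa using hA.trace_eq_sum_eigenvalues

lemma det_rank_one_update {d : ℕ} {A : Matrix (Fin d) (Fin d) ℝ} (hA : IsUnit A.det)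
    (v : Fin d → ℝ) :
    (A + vecMulVec v v).det = A.det * (1 + v ⬝ᵥ (A⁻¹ *ᵥ v)) := by
  rw [vecMulVec_eq (Fin 1), Matrix.det_add_replicateCol_mul_replicateRow hA]
  congr 1
  refine (@Matrix.det_unique ℝ _ (Fin 1) _ (fun a b => decidableEq_of_subsingleton a b) _ _).trans ?_
  have h : (replicateRow (Fin 1) v * A⁻¹ * replicateCol (Fin 1) v) default default = v ⬝ᵥ (A⁻¹ *ᵥ v) := by
    simp only [Matrix.mul_apply, Matrix.replicateRow_apply, Matrix.replicateCol_apply, dotProduct, mulVec,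
      Finset.sum_mul, Finset.mul_sum]
    rw [Finset.sum_comm]
    exact Finset.sum_congr rfl fun i _ => Finset.sum_congr rfl fun j _ => by ring
  have h1 : ((1 : Matrix (Fin 1) (Fin 1) ℝ) + replicateRow (Fin 1) v * A⁻¹ * replicateCol (Fin 1) v)
      default default = 1 + v ⬝ᵥ (A⁻¹ *ᵥ v) := by
    rw [Matrix.add_apply, Matrix.one_apply_eq, h]
  exact h1

lemma log_prod_le_aux {d : ℕ} (hd : 0 < d) (μ : Fin d → ℝ) (hμ : ∀ i, 0 < μ i) :
    Real.log (∏ i, μ i) ≤ d * Real.log ((∑ i, μ i) / d) := by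
  have hdr : (0:ℝ) < d := Nat.cast_pos.mpr hd
  have hgm := Real.geom_mean_le_arith_mean_weighted Finset.univ (fun _ => 1 / (d:ℝ)) μ
    (fun i _ => by positivity) (by simp [Finset.card_univ]; field_simp)
    (fun i _ => (hμ i).le)
  have hlhs : (0:ℝ) < ∏ i, μ i ^ (1/(d:ℝ)) :=
    Finset.prod_pos fun i _ => Real.rpow_pos_of_pos (hμ i) _
  have hlog := Real.log_le_log hlhs hgm
  rw [Real.log_prod (fun i _ => (Real.rpow_pos_of_pos (hμ i) _).ne')] at hlog
  simp_rw [Real.log_rpow (hμ _)] at hlog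
  rw [← Finset.mul_sum, ← Real.log_prod (fun i _ => (hμ i).ne')] at hlog
  have h2 : ∑ i, (fun _ : Fin d => 1/(d:ℝ)) i * μ i = (∑ i, μ i) / d := by
    simp only; rw [← Finset.mul_sum]; ring
  rw [h2] at hlog
  calc Real.log (∏ i, μ i) = d * ((1/(d:ℝ)) * Real.log (∏ i, μ i)) := by field_simp
    _ ≤ d * Real.log ((∑ i, μ i)/d) := mul_le_mul_of_nonneg_left hlog hdr.le

lemma le_two_log (x : ℝ) (h0 : 0 ≤ x) (h1 : x ≤ 1) : x ≤ 2 * Real.log (1 + x) := by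
  have hx : (0:ℝ) < 1 + x := by linarith
  have h := Real.log_le_sub_one_of_pos (x := (1+x)⁻¹) (by positivity)
  rw [Real.log_inv] at h
  have heq : (1+x)⁻¹ - 1 = -(x/(1+x)) := by field_simp; ring
  have hlog : x / (1+x) ≤ Real.log (1+x) := by rw [heq] at h; linarith
  have h2 : x / 2 ≤ x / (1+x) := div_le_div_of_nonneg_left h0 hx (by linarith)
  linarith

lemma quad_inv_le {d : ℕ} {lam : ℝ} (hlam : 0 < lam) {A : Matrix (Fin d) (Fin d) ℝ}
    (hA : A.PosDef) (hge : ∀ y : Fin d → ℝ, lam * (y ⬝ᵥ y) ≤ y ⬝ᵥ (A *ᵥ y))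
    (v : Fin d → ℝ) : v ⬝ᵥ (A⁻¹ *ᵥ v) ≤ (v ⬝ᵥ v) / lam := by
  set y := A⁻¹ *ᵥ v with hy
  have hq0 : 0 ≤ v ⬝ᵥ y := by
    have := hA.inv.posSemidef.dotProduct_mulVec_nonneg v
    simpa using this
  have hAy : A *ᵥ y = v := by
    rw [hy, Matrix.mulVec_mulVec, Matrix.mul_nonsing_inv _ hA.det_pos.ne'.isUnit,
      Matrix.one_mulVec]
  have h1 : lam * (y ⬝ᵥ y) ≤ v ⬝ᵥ y := by
    have := hge y
    rwa [hAy, dotProduct_comm y v] at this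
  have hcs : (v ⬝ᵥ y) ^ 2 ≤ (v ⬝ᵥ v) * (y ⬝ᵥ y) := by
    simpa [dotProduct, pow_two] using
      Finset.sum_mul_sq_le_sq_mul_sq Finset.univ v y
  have hvv : 0 ≤ v ⬝ᵥ v := Finset.sum_nonneg fun i _ => mul_self_nonneg _
  rcases eq_or_lt_of_le hq0 with h | h
  · rw [← h]; positivity
  · rw [le_div_iff₀ hlam]
    nlinarith [mul_le_mul_of_nonneg_left h1 hvv]

/-- Deterministic aggregation step of the paper's Theorem 4.1: Phase I regrets
are each at most `2F`, and Phase II regrets are summed via Cauchy–Schwarz and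
the sum-of-squares bound, giving
`∑_{j=1}^n r'_j + ∑_{t=1}^T r_t ≤ 2nF + √(T(16 β_T d log(1 + T C_g²/(dλ)) + 8 β_T² C_h² T/λ²))`. -/
theorem total_regret_bound
    (d : ℕ) (hd : 1 ≤ d) (Cg lam Ch F : ℝ) (hCg : 0 < Cg) (hlam : Cg ^ 2 ≤ lam)
    (hCh : 0 ≤ Ch) (hF : 0 ≤ F)
    (n : ℕ) (T : ℕ) (hT : 1 ≤ T) (g : ℕ → Fin d → ℝ)
    (hg : ∀ t, 1 ≤ t → t ≤ T → Real.sqrt (g t ⬝ᵥ g t) ≤ Cg)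
    (S : ℕ → Matrix (Fin d) (Fin d) ℝ)
    (hS : ∀ t, S t = lam • (1 : Matrix (Fin d) (Fin d) ℝ) +
      ∑ i ∈ Finset.Ico 1 t, vecMulVec (g i) (g i))
    (u : ℕ → ℝ)
    (hu : ∀ t, u t = Real.sqrt (g t ⬝ᵥ ((S t)⁻¹ *ᵥ g t)))
    (β : ℕ → ℝ) (hβ1 : 0 < β 1)
    (hβmono : ∀ s t, 1 ≤ s → s ≤ t → t ≤ T → β s ≤ β t)
    (r' : ℕ → ℝ) (hr' : ∀ j, 1 ≤ j → j ≤ n → r' j ≤ 2 * F)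
    (r : ℕ → ℝ) (hr0 : ∀ t, 1 ≤ t → t ≤ T → 0 ≤ r t)
    (hr : ∀ t, 1 ≤ t → t ≤ T → r t ≤ 2 * Real.sqrt (β t) * u t + 2 * β t * Ch / lam) :
    ∑ j ∈ Finset.Icc 1 n, r' j + ∑ t ∈ Finset.Icc 1 T, r t ≤
      2 * n * F +
        Real.sqrt (T * (16 * β T * d * Real.log (1 + T * Cg ^ 2 / (d * lam)) +
          8 * β T ^ 2 * Ch ^ 2 * T / lam ^ 2)) := by
  have hlam0 : 0 < lam := lt_of_lt_of_le (by positivity) hlam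
  have hd0 : (0:ℝ) < d := Nat.cast_pos.mpr (by omega)
  have hT0 : (0:ℝ) < T := by exact_mod_cast hT
  -- positive definiteness of S t
  have hpsd : ∀ t, (∑ i ∈ Finset.Ico 1 t, vecMulVec (g i) (g i)).PosSemidef := by
    intro t
    exact Finset.sum_induction _ _ (fun a b ha hb => ha.add hb) Matrix.PosSemidef.zero
      (fun i _ => vmv_psd _)
  have hlamI : (lam • (1 : Matrix (Fin d) (Fin d) ℝ)).PosDef := by
    rw [Matrix.smul_one_eq_diagonal]
    exact Matrix.posDef_diagonal_iff.mpr fun i => hlam0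
  have hSpd : ∀ t, (S t).PosDef := by
    intro t; rw [hS t]; exact hlamI.add_posSemidef (hpsd t)
  -- lower quadratic bound for S t
  have hlow : ∀ t (y : Fin d → ℝ), lam * (y ⬝ᵥ y) ≤ y ⬝ᵥ (S t *ᵥ y) := by
    intro t y
    rw [hS t, Matrix.add_mulVec, dotProduct_add, smul_mulVec, Matrix.one_mulVec,
      dotProduct_smul, smul_eq_mul]
    have := (hpsd t).dotProduct_mulVec_nonneg y
    simp only [star_trivial] at this
    linarith
  set q : ℕ → ℝ := fun t => g t ⬝ᵥ ((S t)⁻¹ *ᵥ g t) with hqdef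
  have hq0 : ∀ t, 0 ≤ q t := by
    intro t
    have := (hSpd t).inv.posSemidef.dotProduct_mulVec_nonneg (g t)
    simpa using this
  have hu2 : ∀ t, u t ^ 2 = q t := by
    intro t; rw [hu t, Real.sq_sqrt (hq0 t)]
  have hgg : ∀ t, 1 ≤ t → t ≤ T → g t ⬝ᵥ g t ≤ Cg ^ 2 := by
    intro t h1 h2
    have hnn : 0 ≤ g t ⬝ᵥ g t := Finset.sum_nonneg fun i _ => mul_self_nonneg _
    have := pow_le_pow_left₀ (Real.sqrt_nonneg _) (hg t h1 h2) 2
    rwa [Real.sq_sqrt hnn] at this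
  have hq1 : ∀ t, 1 ≤ t → t ≤ T → q t ≤ 1 := by
    intro t h1 h2
    have h := quad_inv_le hlam0 (hSpd t) (hlow t) (g t)
    refine h.trans ?_
    rw [div_le_one hlam0]
    exact (hgg t h1 h2).trans hlam
  -- determinant telescoping
  have hstep : ∀ m, 1 ≤ m → (S (m+1)).det = (S m).det * (1 + q m) := by
    intro m hm
    have hSm : S (m+1) = S m + vecMulVec (g m) (g m) := by
      rw [hS (m+1), hS m, Finset.sum_Ico_succ_top hm, add_assoc]
    rw [hSm, det_rank_one_update (hSpd m).det_pos.ne'.isUnit]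
  have hdet : ∀ m, Real.log (S (m+1)).det =
      d * Real.log lam + ∑ t ∈ Finset.Icc 1 m, Real.log (1 + q t) := by
    intro m
    induction m with
    | zero =>
      simp only [Finset.Icc_self, Finset.Icc_eq_empty_of_lt (by norm_num : (1:ℕ) > 0)]
      rw [hS 1]
      simp only [Finset.Ico_self, Finset.sum_empty, add_zero]
      rw [Matrix.smul_one_eq_diagonal, Matrix.det_diagonal]
      simp [Real.log_pow]
    | succ m ih =>
      rw [hstep (m+1) (by omega), Real.log_mul (hSpd (m+1)).det_pos.ne'
        (by have := hq0 (m+1); positivity), ih, Finset.sum_Icc_succ_top (by omega : 1 ≤ m+1)]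
      ring
  -- trace bound
  have htr : (S (T+1)).trace ≤ lam * d + T * Cg ^ 2 := by
    rw [hS (T+1), Matrix.trace_add, Matrix.trace_smul, Matrix.trace_one, Matrix.trace_sum]
    simp only [smul_eq_mul, Fintype.card_fin]
    have : ∑ i ∈ Finset.Ico 1 (T+1), (vecMulVec (g i) (g i)).trace ≤ T * Cg ^ 2 := by
      have hb : ∀ i ∈ Finset.Ico 1 (T+1), (vecMulVec (g i) (g i)).trace ≤ Cg ^ 2 := by
        intro i hi
        rw [Finset.mem_Ico] at hi
        rw [vmv_trace]
        exact hgg i hi.1 (by omega)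
      calc ∑ i ∈ Finset.Ico 1 (T+1), (vecMulVec (g i) (g i)).trace
          ≤ ∑ i ∈ Finset.Ico 1 (T+1), Cg ^ 2 := Finset.sum_le_sum hb
        _ = T * Cg ^ 2 := by rw [Finset.sum_const, Nat.card_Ico]; simp
    linarith
  -- log det bound via eigenvalues
  have hherm := (hSpd (T+1)).isHermitian
  have heig : ∀ i, 0 < hherm.eigenvalues i := (hSpd (T+1)).eigenvalues_pos
  have hdetprod : (S (T+1)).det = ∏ i, hherm.eigenvalues i := by
    simpa using hherm.det_eq_prod_eigenvalues
  have htreig : (S (T+1)).trace = ∑ i, hherm.eigenvalues i := trace_eq_sum_eig hherm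
  have htrpos : 0 < (S (T+1)).trace := by
    rw [htreig]
    exact Finset.sum_pos (fun i _ => heig i) (by
      haveI : Nonempty (Fin d) := Fin.pos_iff_nonempty.mp (by omega)
      exact Finset.univ_nonempty)
  have hlogdet : Real.log (S (T+1)).det ≤ d * Real.log (lam + T * Cg ^ 2 / d) := by
    rw [hdetprod]
    refine (log_prod_le_aux (by omega) _ heig).trans ?_
    have h1 : (∑ i, hherm.eigenvalues i) / d ≤ lam + T * Cg ^ 2 / d := by
      rw [← htreig, div_le_iff₀ hd0]
      calc (S (T+1)).trace ≤ lam * d + T * Cg ^ 2 := htr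
        _ = (lam + T * Cg ^ 2 / d) * d := by field_simp
    have hpos : (0:ℝ) < (∑ i, hherm.eigenvalues i) / d := by
      rw [← htreig]; positivity
    exact mul_le_mul_of_nonneg_left (Real.log_le_log hpos h1) hd0.le
  -- elliptical potential bound
  have hL : ∑ t ∈ Finset.Icc 1 T, q t ≤
      2 * (d * Real.log (1 + T * Cg ^ 2 / (d * lam))) := by
    have h1 : ∑ t ∈ Finset.Icc 1 T, q t ≤ ∑ t ∈ Finset.Icc 1 T, 2 * Real.log (1 + q t) := by
      refine Finset.sum_le_sum fun t ht => ?_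
      rw [Finset.mem_Icc] at ht
      exact le_two_log _ (hq0 t) (hq1 t ht.1 ht.2)
    have h2 : ∑ t ∈ Finset.Icc 1 T, 2 * Real.log (1 + q t)
        = 2 * (Real.log (S (T+1)).det - d * Real.log lam) := by
      rw [← Finset.mul_sum]
      have := hdet T
      rw [this]; ring
    have h3 : Real.log (S (T+1)).det - d * Real.log lam ≤
        d * Real.log (1 + T * Cg ^ 2 / (d * lam)) := by
      have harg : Real.log (lam + T * Cg ^ 2 / d) - Real.log lam
          = Real.log (1 + T * Cg ^ 2 / (d * lam)) := by
        rw [← Real.log_div (by positivity) hlam0.ne']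
        congr 1
        field_simp
      calc Real.log (S (T+1)).det - d * Real.log lam
          ≤ d * Real.log (lam + T * Cg ^ 2 / d) - d * Real.log lam := by linarith [hlogdet]
        _ = d * (Real.log (lam + T * Cg ^ 2 / d) - Real.log lam) := by ring
        _ = d * Real.log (1 + T * Cg ^ 2 / (d * lam)) := by rw [harg]
    linarith
  -- Phase I bound
  have hsum1 : ∑ j ∈ Finset.Icc 1 n, r' j ≤ 2 * n * F := by
    calc ∑ j ∈ Finset.Icc 1 n, r' j ≤ ∑ j ∈ Finset.Icc 1 n, 2 * F := by
          refine Finset.sum_le_sum fun j hj => ?_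
          rw [Finset.mem_Icc] at hj
          exact hr' j hj.1 hj.2
      _ = n * (2 * F) := by rw [Finset.sum_const, Nat.card_Icc]; simp
      _ = 2 * n * F := by ring
  -- Phase II bound
  have hβT : 0 < β T := lt_of_lt_of_le hβ1 (hβmono 1 T le_rfl hT le_rfl)
  have hterm : ∀ t ∈ Finset.Icc 1 T, r t ^ 2 ≤
      8 * β T * q t + 8 * β T ^ 2 * Ch ^ 2 / lam ^ 2 := by
    intro t ht
    rw [Finset.mem_Icc] at ht
    have hβt : 0 < β t := lt_of_lt_of_le hβ1 (hβmono 1 t le_rfl ht.1 ht.2)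
    have hβtT : β t ≤ β T := hβmono t T ht.1 ht.2 le_rfl
    have hu0 : 0 ≤ u t := by rw [hu t]; exact Real.sqrt_nonneg _
    have ha0 : 0 ≤ 2 * Real.sqrt (β t) * u t + 2 * β t * Ch / lam := by positivity
    have h1 : r t ^ 2 ≤ (2 * Real.sqrt (β t) * u t + 2 * β t * Ch / lam) ^ 2 :=
      pow_le_pow_left₀ (hr0 t ht.1 ht.2) (hr t ht.1 ht.2) 2
    have hsq : Real.sqrt (β t) ^ 2 = β t := Real.sq_sqrt hβt.le
    have h2 : (2 * Real.sqrt (β t) * u t + 2 * β t * Ch / lam) ^ 2 ≤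
        8 * β t * u t ^ 2 + 8 * β t ^ 2 * Ch ^ 2 / lam ^ 2 := by
      have hkey : (2 * Real.sqrt (β t) * u t + 2 * β t * Ch / lam) ^ 2 ≤
          2 * (2 * Real.sqrt (β t) * u t) ^ 2 + 2 * (2 * β t * Ch / lam) ^ 2 := by
        nlinarith [sq_nonneg (2 * Real.sqrt (β t) * u t - 2 * β t * Ch / lam)]
      have he1 : 2 * (2 * Real.sqrt (β t) * u t) ^ 2 = 8 * β t * u t ^ 2 := by
        rw [mul_pow, mul_pow, hsq]; ring
      have he2 : 2 * (2 * β t * Ch / lam) ^ 2 = 8 * β t ^ 2 * Ch ^ 2 / lam ^ 2 := by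
        field_simp; ring
      linarith
    have h3 : 8 * β t * u t ^ 2 ≤ 8 * β T * u t ^ 2 :=
      mul_le_mul_of_nonneg_right (by linarith) (sq_nonneg (u t))
    rw [hu2 t] at h3
    have h4 : 8 * β t ^ 2 * Ch ^ 2 / lam ^ 2 ≤ 8 * β T ^ 2 * Ch ^ 2 / lam ^ 2 := by
      have hb2 : β t ^ 2 ≤ β T ^ 2 := pow_le_pow_left₀ hβt.le hβtT 2
      gcongr
    rw [hu2 t] at h2
    linarith
  have hcard : (Finset.Icc 1 T).card = T := by rw [Nat.card_Icc]; omega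
  have hsum2 : ∑ t ∈ Finset.Icc 1 T, r t ^ 2 ≤
      16 * β T * d * Real.log (1 + T * Cg ^ 2 / (d * lam)) +
        8 * β T ^ 2 * Ch ^ 2 * T / lam ^ 2 := by
    calc ∑ t ∈ Finset.Icc 1 T, r t ^ 2
        ≤ ∑ t ∈ Finset.Icc 1 T, (8 * β T * q t + 8 * β T ^ 2 * Ch ^ 2 / lam ^ 2) :=
          Finset.sum_le_sum hterm
      _ = 8 * β T * (∑ t ∈ Finset.Icc 1 T, q t) + T * (8 * β T ^ 2 * Ch ^ 2 / lam ^ 2) := by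
          rw [Finset.sum_add_distrib, ← Finset.mul_sum, Finset.sum_const, hcard]
          ring
      _ ≤ 8 * β T * (2 * (d * Real.log (1 + T * Cg ^ 2 / (d * lam)))) +
            T * (8 * β T ^ 2 * Ch ^ 2 / lam ^ 2) := by
          have := mul_le_mul_of_nonneg_left hL (by positivity : (0:ℝ) ≤ 8 * β T)
          linarith
      _ = 16 * β T * d * Real.log (1 + T * Cg ^ 2 / (d * lam)) +
            8 * β T ^ 2 * Ch ^ 2 * T / lam ^ 2 := by ring
  have hR0 : 0 ≤ ∑ t ∈ Finset.Icc 1 T, r t := by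
    refine Finset.sum_nonneg fun t ht => ?_
    rw [Finset.mem_Icc] at ht
    exact hr0 t ht.1 ht.2
  have hCS : (∑ t ∈ Finset.Icc 1 T, r t) ^ 2 ≤ T * ∑ t ∈ Finset.Icc 1 T, r t ^ 2 := by
    have := sq_sum_le_card_mul_sum_sq (s := Finset.Icc 1 T) (f := r)
    rwa [hcard] at this
  have hfin : ∑ t ∈ Finset.Icc 1 T, r t ≤
      Real.sqrt (T * (16 * β T * d * Real.log (1 + T * Cg ^ 2 / (d * lam)) +
        8 * β T ^ 2 * Ch ^ 2 * T / lam ^ 2)) := by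
    have hlognn : 0 ≤ Real.log (1 + ↑T * Cg ^ 2 / (↑d * lam)) := by
      refine Real.log_nonneg ?_
      have : 0 ≤ (T:ℝ) * Cg ^ 2 / (↑d * lam) := by positivity
      linarith
    rw [Real.le_sqrt hR0 (by
      refine mul_nonneg hT0.le (add_nonneg ?_ (by positivity))
      exact mul_nonneg (by positivity) hlognn)]
    calc (∑ t ∈ Finset.Icc 1 T, r t) ^ 2 ≤ T * ∑ t ∈ Finset.Icc 1 T, r t ^ 2 := hCS
      _ ≤ T * (16 * β T * d * Real.log (1 + T * Cg ^ 2 / (d * lam)) +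
            8 * β T ^ 2 * Ch ^ 2 * T / lam ^ 2) :=
          mul_le_mul_of_nonneg_left hsum2 hT0.le
  linarith
end
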